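/- arXiv:2510.15674 — 3 statements merged into one kernel-verified Lean document; each statement's English description precedes it below -/
import Mathlib

section
/- Suppose either W^T(p̄ − p̄_target) ≠ 0 in ℝ^d, or (1/|S|)·Σ_{s∈S} (W h_s)_{y_s} ≠ (1/|S|)·Σ_{s∈S} Σ_{k=1}^{V} p_s(k)·(W h_s)_k. Then there exists a pair (δ, T) ∈ ℝ^d × (0, ∞) with (δ, T) ≠ (0, 1) such that L(δ, T) < L(0, 1). -/
noncomputable section

/-- The calibration loss `L(δ, T)`: the average over generation steps `s ∈ S` of
`log Σ_k exp(g_s(δ)_k / T) − g_s(δ)_{y_s} / T`, where `g_s(δ) = W (h_s + δ)`. -/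
def calibLoss {d V : ℕ} {S : Type*} [Fintype S]
    (W : Matrix (Fin V) (Fin d) ℝ) (h : S → Fin d → ℝ) (y : S → Fin V)
    (δ : Fin d → ℝ) (T : ℝ) : ℝ :=
  (Fintype.card S : ℝ)⁻¹ *
    ∑ s : S, (Real.log (∑ k : Fin V, Real.exp (W.mulVec (h s + δ) k / T))
      - W.mulVec (h s + δ) (y s) / T)

/-- `p_s = softmax_1(W h_s)`: the model's predictive distribution at temperature 1. -/
def softmax1 {d V : ℕ} {S : Type*}
    (W : Matrix (Fin V) (Fin d) ℝ) (h : S → Fin d → ℝ) (s : S) (k : Fin V) : ℝ :=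
  Real.exp (W.mulVec (h s) k) / ∑ l : Fin V, Real.exp (W.mulVec (h s) l)

lemma exists_lt_of_hasDerivAt_ne {f : ℝ → ℝ} {t₀ c : ℝ} (hf : HasDerivAt f c t₀)
    (hc : c ≠ 0) {ε : ℝ} (hε : 0 < ε) :
    ∃ t, |t - t₀| < ε ∧ t ≠ t₀ ∧ f t < f t₀ := by
  have hs := hasDerivAt_iff_tendsto_slope.mp hf
  have hball : ∀ᶠ t in nhds t₀, |t - t₀| < ε := by
    filter_upwards [Metric.ball_mem_nhds t₀ hε] with t ht
    simpa [Real.dist_eq] using ht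
  rcases hc.lt_or_gt with hneg | hpos
  · have h1 : ∀ᶠ t in nhdsWithin t₀ (Set.Ioi t₀), slope f t₀ t < 0 :=
      (hs.mono_left (nhdsWithin_mono _ (fun x hx => ne_of_gt hx))).eventually
        (gt_mem_nhds hneg)
    have h2 : ∀ᶠ t in nhdsWithin t₀ (Set.Ioi t₀), |t - t₀| < ε :=
      hball.filter_mono nhdsWithin_le_nhds
    rcases (h1.and (h2.and self_mem_nhdsWithin)).exists with ⟨t, hslope, hdist, hmem⟩
    have htt : t₀ < t := hmem
    refine ⟨t, hdist, ne_of_gt htt, ?_⟩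
    have hst : slope f t₀ t = (f t - f t₀) / (t - t₀) := by
      simp [slope_def_field, div_eq_inv_mul]
    rw [hst] at hslope
    rcases (div_neg_iff).mp hslope with ⟨hnum, hden⟩ | ⟨hnum, hden⟩
    · linarith
    · linarith
  · have h1 : ∀ᶠ t in nhdsWithin t₀ (Set.Iio t₀), 0 < slope f t₀ t :=
      (hs.mono_left (nhdsWithin_mono _ (fun x hx => ne_of_lt hx))).eventually
        (lt_mem_nhds hpos)
    have h2 : ∀ᶠ t in nhdsWithin t₀ (Set.Iio t₀), |t - t₀| < ε :=
      hball.filter_mono nhdsWithin_le_nhds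
    rcases (h1.and (h2.and self_mem_nhdsWithin)).exists with ⟨t, hslope, hdist, hmem⟩
    have htt : t < t₀ := hmem
    refine ⟨t, hdist, ne_of_lt htt, ?_⟩
    have hst : slope f t₀ t = (f t - f t₀) / (t - t₀) := by
      simp [slope_def_field, div_eq_inv_mul]
    rw [hst] at hslope
    rcases (div_pos_iff).mp hslope with ⟨hnum, hden⟩ | ⟨hnum, hden⟩
    · linarith
    · linarith

lemma hasDerivAt_avgLSE {V : ℕ} (hV : 1 ≤ V) {S : Type*} [Fintype S]
    (A B : S → Fin V → ℝ) (y : S → Fin V) (t₀ : ℝ) :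
    HasDerivAt (fun t => (Fintype.card S : ℝ)⁻¹ * ∑ s : S,
        (Real.log (∑ k : Fin V, Real.exp (A s k + t * B s k)) - (A s (y s) + t * B s (y s))))
      ((Fintype.card S : ℝ)⁻¹ * ∑ s : S,
        ((∑ k : Fin V, B s k * Real.exp (A s k + t₀ * B s k)) /
          (∑ k : Fin V, Real.exp (A s k + t₀ * B s k)) - B s (y s))) t₀ := by
  have : Nonempty (Fin V) := ⟨⟨0, hV⟩⟩
  refine HasDerivAt.const_mul _ (HasDerivAt.fun_sum fun s _ => ?_)
  have hpos : (0:ℝ) < ∑ k, Real.exp (A s k + t₀ * B s k) :=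
    Finset.sum_pos (fun k _ => Real.exp_pos _) Finset.univ_nonempty
  have hsum : HasDerivAt (fun t => ∑ k, Real.exp (A s k + t * B s k))
      (∑ k, B s k * Real.exp (A s k + t₀ * B s k)) t₀ := by
    refine HasDerivAt.fun_sum fun k _ => ?_
    have h1 : HasDerivAt (fun t => A s k + t * B s k) (B s k) t₀ := by
      simpa using HasDerivAt.const_add (A s k) ((hasDerivAt_id t₀).mul_const (B s k))
    simpa [mul_comm] using h1.exp
  have hlog := hsum.log (ne_of_gt hpos)
  have hlin : HasDerivAt (fun t => A s (y s) + t * B s (y s)) (B s (y s)) t₀ := by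
    simpa using HasDerivAt.const_add (A s (y s)) ((hasDerivAt_id t₀).mul_const (B s (y s)))
  simpa using hlog.fun_sub hlin

/-- **Existence of an improving joint solution `(δ, T)`.**
If `Wᵀ (p̄ − p̄_target) ≠ 0`, or the average ground-truth logit differs from the average
expected logit, then there is `(δ, T) ≠ (0, 1)` with `T > 0` and `L(δ, T) < L(0, 1)`. -/
theorem exists_improving_joint_solution {d V : ℕ} (hV : 1 ≤ V)
    {S : Type*} [Fintype S] [Nonempty S]
    (W : Matrix (Fin V) (Fin d) ℝ) (h : S → Fin d → ℝ) (y : S → Fin V)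
    (hyp :
      W.transpose.mulVec
          (fun k => ((Fintype.card S : ℝ)⁻¹ * ∑ s : S, softmax1 W h s k)
            - ((Fintype.card S : ℝ)⁻¹ * ∑ s : S, if y s = k then (1 : ℝ) else 0)) ≠ 0
      ∨ (Fintype.card S : ℝ)⁻¹ * ∑ s : S, W.mulVec (h s) (y s)
          ≠ (Fintype.card S : ℝ)⁻¹ * ∑ s : S, ∑ k : Fin V, softmax1 W h s k * W.mulVec (h s) k) :
    ∃ (δ : Fin d → ℝ) (T : ℝ), 0 < T ∧ (δ, T) ≠ ((0 : Fin d → ℝ), (1 : ℝ)) ∧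
      calibLoss W h y δ T < calibLoss W h y 0 1 := by
  set a : S → Fin V → ℝ := fun s k => W.mulVec (h s) k with ha
  rcases hyp with hyp1 | hyp2
  · -- direction case
    set q : Fin V → ℝ := fun k => ((Fintype.card S : ℝ)⁻¹ * ∑ s : S, softmax1 W h s k)
            - ((Fintype.card S : ℝ)⁻¹ * ∑ s : S, if y s = k then (1 : ℝ) else 0) with hq
    set u : Fin d → ℝ := W.transpose.mulVec q with hu
    set v : Fin d → ℝ := fun i => -u i with hv
    set b : Fin V → ℝ := W.mulVec v with hb
    have hG := hasDerivAt_avgLSE hV (fun s k => a s k) (fun _ k => b k) y 0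
    simp only [zero_mul, add_zero] at hG
    have hGL : ∀ t : ℝ, calibLoss W h y (t • v) 1
        = (Fintype.card S : ℝ)⁻¹ * ∑ s : S,
            (Real.log (∑ k : Fin V, Real.exp (a s k + t * b k)) - (a s (y s) + t * b (y s))) := by
      intro t
      simp [calibLoss, Matrix.mulVec_add, Matrix.mulVec_smul, ha, hb]
    -- the derivative equals -∑ u_i²
    have hbdef : ∀ s, (∑ k, b k * Real.exp (a s k)) / (∑ k, Real.exp (a s k))
        = ∑ k, softmax1 W h s k * b k := by
      intro s
      rw [Finset.sum_div]
      refine Finset.sum_congr rfl fun k _ => ?_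
      rw [softmax1, div_mul_eq_mul_div, mul_comm]
    have key : ((Fintype.card S : ℝ)⁻¹ * ∑ s : S,
        ((∑ k, b k * Real.exp (a s k)) / (∑ k, Real.exp (a s k)) - b (y s)))
        = -(∑ i, u i ^ 2) := by
      have step1 : ((Fintype.card S : ℝ)⁻¹ * ∑ s : S,
          ((∑ k, b k * Real.exp (a s k)) / (∑ k, Real.exp (a s k)) - b (y s)))
          = ∑ k, q k * b k := by
        simp only [hbdef]
        rw [Finset.sum_sub_distrib, mul_sub]
        have e1 : ∑ s : S, ∑ k, softmax1 W h s k * b k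
            = ∑ k, (∑ s : S, softmax1 W h s k) * b k := by
          rw [Finset.sum_comm]
          simp [Finset.sum_mul]
        have e2 : ∑ s : S, b (y s) = ∑ k, (∑ s : S, if y s = k then (1:ℝ) else 0) * b k := by
          symm
          calc ∑ k, (∑ s : S, if y s = k then (1:ℝ) else 0) * b k
              = ∑ k, ∑ s : S, (if y s = k then (1:ℝ) else 0) * b k := by
                refine Finset.sum_congr rfl fun k _ => ?_
                rw [Finset.sum_mul]
            _ = ∑ s : S, ∑ k, (if y s = k then (1:ℝ) else 0) * b k := Finset.sum_comm
            _ = ∑ s : S, b (y s) := by simp [ite_mul]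
        rw [e1, e2, hq]
        simp only [sub_mul, Finset.sum_sub_distrib, Finset.mul_sum]
        congr 1 <;> {refine Finset.sum_congr rfl fun k _ => ?_ ; rw [← Finset.mul_sum]; ring}
      have step2 : ∑ k, q k * b k = ∑ i, u i * v i := by
        have hbk : ∀ k, b k = ∑ i, W k i * v i := fun k => rfl
        have hui : ∀ i, u i = ∑ k, W k i * q k := by
          intro i
          rw [hu]
          rfl
        calc ∑ k, q k * b k = ∑ k, ∑ i, q k * (W k i * v i) := by
              simp only [hbk, Finset.mul_sum]
          _ = ∑ i, ∑ k, q k * (W k i * v i) := Finset.sum_comm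
          _ = ∑ i, u i * v i := by
              refine Finset.sum_congr rfl fun i _ => ?_
              rw [hui, Finset.sum_mul]
              refine Finset.sum_congr rfl fun k _ => ?_
              ring
      have step3 : ∑ i, u i * v i = -(∑ i, u i ^ 2) := by
        rw [← Finset.sum_neg_distrib]
        refine Finset.sum_congr rfl fun i _ => ?_
        simp [hv]
        ring
      rw [step1, step2, step3]
    rw [key] at hG
    have hupos : 0 < ∑ i, u i ^ 2 := by
      rcases Function.ne_iff.mp hyp1 with ⟨i, hi⟩
      refine Finset.sum_pos' (fun j _ => sq_nonneg _) ⟨i, Finset.mem_univ i, ?_⟩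
      have : u i ≠ 0 := hi
      positivity
    have hc : -(∑ i, u i ^ 2) ≠ 0 := by linarith
    obtain ⟨t, hdist, htne, hlt⟩ := exists_lt_of_hasDerivAt_ne hG hc (ε := 1) one_pos
    refine ⟨t • v, 1, one_pos, ?_, ?_⟩
    · intro heq
      have hδ : t • v = 0 := (Prod.mk.injEq _ _ _ _).mp heq |>.1
      rcases Function.ne_iff.mp hyp1 with ⟨i, hi⟩
      have : t * v i = 0 := congrFun hδ i
      have hvi : v i ≠ 0 := by simp [hv]; exact hi
      rcases mul_eq_zero.mp this with h0 | h0
      · exact htne (by simpa using h0)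
      · exact hvi h0
    · have h0 : calibLoss W h y 0 1 = calibLoss W h y ((0:ℝ) • v) 1 := by
        rw [zero_smul]
      rw [h0, hGL, hGL]
      simpa using hlt
  · -- temperature case
    have hF := hasDerivAt_avgLSE hV (fun _ _ => (0:ℝ)) a y 1
    simp only [zero_add, one_mul] at hF
    have hE : ∀ s : S, (∑ k, a s k * Real.exp (a s k)) / (∑ k, Real.exp (a s k))
        = ∑ k, softmax1 W h s k * a s k := by
      intro s
      rw [Finset.sum_div]
      refine Finset.sum_congr rfl fun k _ => ?_
      rw [softmax1, div_mul_eq_mul_div, mul_comm]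
    have hc : ((Fintype.card S : ℝ)⁻¹ * ∑ s : S,
        ((∑ k, a s k * Real.exp (a s k)) / (∑ k, Real.exp (a s k)) - a s (y s))) ≠ 0 := by
      intro h0
      apply hyp2
      simp only [hE] at h0
      rw [Finset.sum_sub_distrib, mul_sub] at h0
      linarith [h0]
    obtain ⟨β, hdist, hβne, hlt⟩ := exists_lt_of_hasDerivAt_ne hF hc (ε := 1/2) (by norm_num)
    have hβpos : 0 < β := by
      rcases abs_lt.mp hdist with ⟨h1, h2⟩
      linarith
    have hL0 : ∀ T : ℝ, calibLoss W h y 0 T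
        = (Fintype.card S : ℝ)⁻¹ * ∑ s : S,
            (Real.log (∑ k : Fin V, Real.exp (T⁻¹ * a s k)) - T⁻¹ * a s (y s)) := by
      intro T
      simp [calibLoss, div_eq_inv_mul, ha]
    refine ⟨0, β⁻¹, inv_pos.mpr hβpos, ?_, ?_⟩
    · intro heq
      have : β⁻¹ = 1 := (Prod.mk.injEq _ _ _ _).mp heq |>.2
      exact hβne (by rwa [inv_eq_one] at this)
    · rw [hL0, hL0, inv_inv, inv_one]
      exact hlt


end
end

section
/- If W^T(p̄ − p̄_target) ≠ 0 in ℝ^d, then there exists δ ∈ ℝ^d with δ ≠ 0 such that L(δ, 1) < L(0, 1). -/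
noncomputable section

/-- If `Wᵀ (p̄ − p̄_target) ≠ 0` in `ℝ^d`, then there exists `δ ≠ 0` with
`L(δ, 1) < L(0, 1)`. -/
theorem exists_improving_delta {d V : ℕ} (hV : 1 ≤ V)
    {S : Type*} [Fintype S] [Nonempty S]
    (W : Matrix (Fin V) (Fin d) ℝ) (h : S → Fin d → ℝ) (y : S → Fin V)
    (hyp :
      W.transpose.mulVec
          (fun k => ((Fintype.card S : ℝ)⁻¹ * ∑ s : S, softmax1 W h s k)
            - ((Fintype.card S : ℝ)⁻¹ * ∑ s : S, if y s = k then (1 : ℝ) else 0)) ≠ 0) :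
    ∃ δ : Fin d → ℝ, δ ≠ 0 ∧ calibLoss W h y δ 1 < calibLoss W h y 0 1 := by
  classical
  have hVpos : 0 < V := hV
  haveI : Nonempty (Fin V) := ⟨⟨0, hVpos⟩⟩
  set C : ℝ := (Fintype.card S : ℝ)⁻¹ with hC
  set q : Fin V → ℝ := fun k => (C * ∑ s : S, softmax1 W h s k)
      - (C * ∑ s : S, if y s = k then (1 : ℝ) else 0) with hq
  set g : Fin d → ℝ := W.transpose.mulVec q with hg
  have hg0 : g ≠ 0 := hyp
  set v : Fin d → ℝ := -g with hv
  set A : S → Fin V → ℝ := fun s => W.mulVec (h s) with hA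
  set B : Fin V → ℝ := W.mulVec v with hB
  -- rewrite the loss along the line `t • v`
  have hline : ∀ t : ℝ, calibLoss W h y (t • v) 1 =
      C * ∑ s : S, (Real.log (∑ k : Fin V, Real.exp (A s k + t * B k))
        - (A s (y s) + t * B (y s))) := by
    intro t
    unfold calibLoss
    simp [Matrix.mulVec_add, Matrix.mulVec_smul, hA, hB, smul_eq_mul]
    exact Or.inl hC.symm
  set f : ℝ → ℝ := fun t =>
      C * ∑ s : S, (Real.log (∑ k : Fin V, Real.exp (A s k + t * B k))
        - (A s (y s) + t * B (y s))) with hf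
  have hZpos : ∀ (s : S) (t : ℝ), 0 < ∑ k : Fin V, Real.exp (A s k + t * B k) := by
    intro s t
    exact Finset.sum_pos (fun k _ => Real.exp_pos _) Finset.univ_nonempty
  -- derivative of f at 0
  set D : ℝ := C * ∑ s : S,
      ((∑ k : Fin V, Real.exp (A s k) * B k) / (∑ k : Fin V, Real.exp (A s k)) - B (y s))
    with hD
  have hderiv : HasDerivAt f D 0 := by
    have hs : ∀ s : S, HasDerivAt
        (fun t => Real.log (∑ k : Fin V, Real.exp (A s k + t * B k))
          - (A s (y s) + t * B (y s)))
        ((∑ k : Fin V, Real.exp (A s k) * B k) / (∑ k : Fin V, Real.exp (A s k)) - B (y s))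
        0 := by
      intro s
      have hsum : HasDerivAt (fun t => ∑ k : Fin V, Real.exp (A s k + t * B k))
          (∑ k : Fin V, Real.exp (A s k) * B k) 0 := by
        have := HasDerivAt.fun_sum (u := Finset.univ)
          (fun k (_ : k ∈ Finset.univ) =>
            (((hasDerivAt_mul_const (B k)).const_add (A s k)).exp :
              HasDerivAt (fun t => Real.exp (A s k + t * B k))
                (Real.exp (A s k + 0 * B k) * B k) 0))
        simpa using this
      have hlog := hsum.log (ne_of_gt (hZpos s 0))
      have hlin : HasDerivAt (fun t : ℝ => A s (y s) + t * B (y s)) (B (y s)) 0 :=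
        (hasDerivAt_mul_const (B (y s))).const_add (A s (y s))
      have := hlog.fun_sub hlin
      simpa using this
    have := (HasDerivAt.sum (u := Finset.univ) (fun s (_ : s ∈ Finset.univ) => hs s)).const_mul C
    simpa [hf, hD] using this
  -- compute D
  have hDval : D = ∑ j, g j * v j := by
    have hswap : ∀ s : S,
        (∑ k : Fin V, Real.exp (A s k) * B k) / (∑ k : Fin V, Real.exp (A s k)) - B (y s)
        = ∑ k : Fin V, (softmax1 W h s k - if y s = k then (1 : ℝ) else 0) * B k := by
      intro s
      rw [Finset.sum_div]
      have h1 : ∀ k : Fin V, Real.exp (A s k) * B k / (∑ l : Fin V, Real.exp (A s l))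
          = softmax1 W h s k * B k := by
        intro k
        unfold softmax1
        rw [hA]
        ring
      have h2 : B (y s) = ∑ k : Fin V, (if y s = k then (1:ℝ) else 0) * B k := by
        simp [Finset.sum_ite_eq]
      calc (∑ k : Fin V, Real.exp (A s k) * B k / ∑ l : Fin V, Real.exp (A s l)) - B (y s)
          = (∑ k : Fin V, softmax1 W h s k * B k)
            - ∑ k : Fin V, (if y s = k then (1:ℝ) else 0) * B k := by
            rw [Finset.sum_congr rfl (fun k _ => h1 k), ← h2]
        _ = ∑ k : Fin V, (softmax1 W h s k - if y s = k then (1:ℝ) else 0) * B k := by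
            rw [← Finset.sum_sub_distrib]
            exact Finset.sum_congr rfl (fun k _ => by ring)
    have hDq : D = ∑ k : Fin V, q k * B k := by
      rw [hD, Finset.sum_congr rfl (fun s _ => hswap s), Finset.mul_sum]
      simp only [Finset.mul_sum]
      rw [Finset.sum_comm]
      refine Finset.sum_congr rfl (fun k _ => ?_)
      simp only [← mul_assoc]
      rw [← Finset.sum_mul, ← Finset.mul_sum, Finset.sum_sub_distrib, mul_sub]
    rw [hDq]
    have hBdef : ∀ k, B k = ∑ j, W k j * v j := by
      intro k; simp [hB, Matrix.mulVec, dotProduct]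
    have hgdef : ∀ j, g j = ∑ k, W k j * q k := by
      intro j; simp [hg, Matrix.mulVec, dotProduct, Matrix.transpose_apply]
    calc ∑ k : Fin V, q k * B k = ∑ k : Fin V, ∑ j, q k * (W k j * v j) := by
          refine Finset.sum_congr rfl fun k _ => ?_
          rw [hBdef k, Finset.mul_sum]
      _ = ∑ j, ∑ k : Fin V, q k * (W k j * v j) := Finset.sum_comm
      _ = ∑ j, g j * v j := by
          refine Finset.sum_congr rfl fun j _ => ?_
          rw [hgdef j, Finset.sum_mul]
          exact Finset.sum_congr rfl fun k _ => by ring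
  have hDneg : D < 0 := by
    rw [hDval, hv]
    have : (∑ j, g j * (-g) j) = -∑ j, g j ^ 2 := by
      rw [← Finset.sum_neg_distrib]
      exact Finset.sum_congr rfl (fun j _ => by simp [Pi.neg_apply]; ring)
    rw [this, neg_lt_zero]
    obtain ⟨j, hj⟩ := Function.ne_iff.mp hg0
    refine Finset.sum_pos' (fun i _ => sq_nonneg _) ⟨j, Finset.mem_univ j, ?_⟩
    have : g j ≠ 0 := by simpa using hj
    positivity
  -- use negative derivative to find t > 0 with f t < f 0
  have hslope : Filter.Tendsto (slope f 0) (nhdsWithin 0 (Set.Ioi (0:ℝ))) (nhds D) := by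
    have := hasDerivAt_iff_tendsto_slope.mp hderiv
    exact this.mono_left (nhdsWithin_mono 0 (fun x hx => ne_of_gt hx))
  have hev : ∀ᶠ t in nhdsWithin (0:ℝ) (Set.Ioi (0:ℝ)), slope f 0 t < 0 :=
    hslope.eventually_lt_const hDneg
  have hpos : ∀ᶠ t in nhdsWithin (0:ℝ) (Set.Ioi (0:ℝ)), (0:ℝ) < t :=
    eventually_mem_nhdsWithin
  obtain ⟨t, hst, htpos⟩ := (hev.and hpos).exists
  refine ⟨t • v, ?_, ?_⟩
  · have hvne : v ≠ 0 := by
      rw [hv]; simpa using hg0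
    exact smul_ne_zero (ne_of_gt htpos) hvne
  · have hft : f t < f 0 := by
      have : (f t - f 0) / t < 0 := by simpa [slope_def_field] using hst
      have := (div_neg_iff.mp this)
      rcases this with ⟨h1, h2⟩ | ⟨h1, h2⟩
      · linarith
      · linarith
    have h0 : f 0 = calibLoss W h y 0 1 := by
      rw [hf]
      have := hline 0
      simpa using this.symm
    have ht : f t = calibLoss W h y (t • v) 1 := (hline t).symm
    rw [← ht, ← h0]
    exact hft

end
end

section
/- If (1/|S|)·Σ_{s∈S} (W h_s)_{y_s} ≠ (1/|S|)·Σ_{s∈S} Σ_{k=1}^{V} p_s(k)·(W h_s)_k (i.e., the average logit of the ground-truth tokens differs from the average expected logit under the model's predictive distributions at temperature 1), then there exists T > 0 with T ≠ 1 such that L(0, T) < L(0, 1). -/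
noncomputable section

lemma aux_deriv_lt {f : ℝ → ℝ} {c : ℝ} (hf : HasDerivAt f c 1) (hc : c ≠ 0) :
    ∃ x : ℝ, 0 < x ∧ x ≠ 1 ∧ f x < f 1 := by
  rw [hasDerivAt_iff_tendsto_slope] at hf
  rcases lt_or_gt_of_ne hc with hneg | hpos
  · have h1 : Filter.Tendsto (slope f 1) (nhdsWithin 1 (Set.Ioi 1)) (nhds c) :=
      hf.mono_left (nhdsWithin_mono _ (fun x hx => ne_of_gt hx))
    have h2 : ∀ᶠ x in nhdsWithin 1 (Set.Ioi 1), slope f 1 x < 0 :=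
      h1.eventually_lt_const hneg
    have h3 : ∀ᶠ x in nhdsWithin 1 (Set.Ioi 1), x ∈ Set.Ioi (1:ℝ) :=
      eventually_mem_nhdsWithin
    obtain ⟨x, hs, hx⟩ := (h2.and h3).exists
    refine ⟨x, by linarith [hx.out], ne_of_gt hx.out, ?_⟩
    rw [slope_def_field] at hs
    have : f x - f 1 < 0 := by
      rcases (div_neg_iff).mp hs with ⟨_, hh⟩ | ⟨hh, _⟩
      · linarith [hx.out]
      · linarith
    linarith
  · have h1 : Filter.Tendsto (slope f 1) (nhdsWithin 1 (Set.Ioo 0 1)) (nhds c) :=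
      hf.mono_left (nhdsWithin_mono _ (fun x hx => ne_of_lt hx.2))
    have h2 : ∀ᶠ x in nhdsWithin 1 (Set.Ioo 0 1), slope f 1 x > 0 :=
      h1.eventually_const_lt hpos
    have h3 : ∀ᶠ x in nhdsWithin 1 (Set.Ioo 0 1), x ∈ Set.Ioo (0:ℝ) 1 :=
      eventually_mem_nhdsWithin
    have hne : (nhdsWithin (1:ℝ) (Set.Ioo 0 1)).NeBot := by
      apply mem_closure_iff_nhdsWithin_neBot.mp
      rw [closure_Ioo (by norm_num : (0:ℝ) ≠ 1)]
      exact ⟨le_of_lt one_pos, le_refl 1⟩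
    obtain ⟨x, hs, hx⟩ := (h2.and h3).exists
    refine ⟨x, hx.1, ne_of_lt hx.2, ?_⟩
    rw [slope_def_field] at hs
    have : f x - f 1 < 0 := by
      rcases (div_pos_iff).mp hs with ⟨hh, hh'⟩ | ⟨hh, hh'⟩
      · linarith [hx.2]
      · linarith
    linarith

/-- If the average ground-truth logit differs from the average expected logit (under the
model's predictive distributions at temperature 1), then there exists `T > 0`, `T ≠ 1`,
with `L(0, T) < L(0, 1)`. -/
theorem exists_improving_temperature {d V : ℕ} (hV : 1 ≤ V)
    {S : Type*} [Fintype S] [Nonempty S]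
    (W : Matrix (Fin V) (Fin d) ℝ) (h : S → Fin d → ℝ) (y : S → Fin V)
    (hyp : (Fintype.card S : ℝ)⁻¹ * ∑ s : S, W.mulVec (h s) (y s)
        ≠ (Fintype.card S : ℝ)⁻¹ * ∑ s : S, ∑ k : Fin V, softmax1 W h s k * W.mulVec (h s) k) :
    ∃ T : ℝ, 0 < T ∧ T ≠ 1 ∧ calibLoss W h y 0 T < calibLoss W h y 0 1 := by
  set a : S → Fin V → ℝ := fun s k => W.mulVec (h s) k with ha
  set f : ℝ → ℝ := fun β => (Fintype.card S : ℝ)⁻¹ *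
    ∑ s : S, (Real.log (∑ k : Fin V, Real.exp (β * a s k)) - β * a s (y s)) with hfdef
  have hpos : ∀ s : S, ∀ β : ℝ, 0 < ∑ k : Fin V, Real.exp (β * a s k) := by
    intro s β
    exact Finset.sum_pos (fun k _ => Real.exp_pos _) ⟨⟨0, by omega⟩, Finset.mem_univ _⟩
  set c : ℝ := (Fintype.card S : ℝ)⁻¹ *
      ∑ s : S, ((∑ k : Fin V, a s k * Real.exp (a s k)) / (∑ l : Fin V, Real.exp (a s l))
        - a s (y s)) with hcdef
  have hder : HasDerivAt f c 1 := by
    apply HasDerivAt.const_mul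
    apply HasDerivAt.fun_sum
    intro s _
    apply HasDerivAt.sub
    · have hg : HasDerivAt (fun β => ∑ k : Fin V, Real.exp (β * a s k))
          (∑ k : Fin V, a s k * Real.exp (1 * a s k)) 1 := by
        apply HasDerivAt.fun_sum
        intro k _
        simpa [mul_comm] using ((hasDerivAt_id (1:ℝ)).mul_const (a s k)).exp
      simpa [one_mul] using hg.log (ne_of_gt (hpos s 1))
    · simpa using (hasDerivAt_id (1:ℝ)).mul_const (a s (y s))
  have hsm : ∀ s : S, (∑ k : Fin V, a s k * Real.exp (a s k)) / (∑ l : Fin V, Real.exp (a s l))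
      = ∑ k : Fin V, softmax1 W h s k * a s k := by
    intro s
    rw [Finset.sum_div]
    apply Finset.sum_congr rfl
    intro k _
    simp only [softmax1, ha]
    ring
  have hc : c ≠ 0 := by
    have : c = ((Fintype.card S : ℝ)⁻¹ * ∑ s : S, ∑ k : Fin V, softmax1 W h s k * a s k)
        - (Fintype.card S : ℝ)⁻¹ * ∑ s : S, a s (y s) := by
      rw [hcdef, ← mul_sub, ← Finset.sum_sub_distrib]
      congr 1
      exact Finset.sum_congr rfl fun s _ => by rw [hsm s]
    rw [this]
    exact sub_ne_zero_of_ne (Ne.symm hyp)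
  obtain ⟨x, hx0, hx1, hflt⟩ := aux_deriv_lt hder hc
  refine ⟨x⁻¹, inv_pos.mpr hx0, fun hh => hx1 (by simpa using congrArg (·⁻¹) hh), ?_⟩
  have heq : ∀ T : ℝ, calibLoss W h y 0 T = f T⁻¹ := by
    intro T
    simp [calibLoss, hfdef, div_eq_inv_mul, ha]
  rw [heq, heq]
  simpa [inv_inv] using hflt

end
end
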